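/- Fix integers n ≥ T ≥ 1 and a filter f : Fin T → ℝ. Define the autocorrelations c_i := Σ_{k=0}^{T−1−i} f_k · f_{k+i} for 0 ≤ i ≤ T−1 (so c₀ = Σ_{k=0}^{T−1} f_k² = ‖f‖₂²), and for j ∈ {0, 1, …, n−1} define q_j := c₀ + 2·Σ_{i=1}^{T−1} c_i · cos(2π·j·i/n). Let σ_1 ≥ σ_2 ≥ … ≥ σ_n be the values q_0, …, q_{n−1} listed in non-increasing order. Then for every p with 1 ≤ p ≤ n, σ_1 − σ_p ≤ π · ‖f‖₂² · T² · p / n. -/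

import Mathlib

open Finset Real

private lemma myCosLip (a b : ℝ) : |Real.cos a - Real.cos b| ≤ |a - b| := by
  rw [Real.cos_sub_cos]
  have h1 : |Real.sin ((a+b)/2)| ≤ 1 := Real.abs_sin_le_one _
  have h2 : |Real.sin ((a-b)/2)| ≤ |(a-b)/2| := Real.abs_sin_le_abs
  calc |(-2) * Real.sin ((a+b)/2) * Real.sin ((a-b)/2)|
      = 2 * |Real.sin ((a+b)/2)| * |Real.sin ((a-b)/2)| := by
        rw [abs_mul, abs_mul]; norm_num
    _ ≤ 2 * 1 * |(a-b)/2| := by gcongr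
    _ = |a - b| := by rw [abs_div]; norm_num; ring

private lemma mySumIcc (m : ℕ) : ∑ i ∈ Finset.Icc 1 m, (i:ℝ) = m*(m+1)/2 := by
  induction m with
  | zero => simp
  | succ k ih =>
    rw [Finset.sum_Icc_succ_top (by omega), ih]
    push_cast; ring

/-- **Lemma A.1.** For the squared singular values `q j = c₀ + 2 ∑_{i=1}^{T-1} cᵢ cos(2πji/n)`
of a single-channel circular convolution with filter `f` of length `T` on inputs of length `n`,
sorted non-increasingly as `σ₁ ≥ … ≥ σₙ`, one has `σ₁ − σₚ ≤ π ‖f‖₂² T² p / n`. -/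
theorem conv_sq_singular_top_gap (n T : ℕ) (hT : 1 ≤ T) (hn : T ≤ n) (f : Fin T → ℝ)
    (F : ℕ → ℝ) (hF : ∀ m (h : m < T), F m = f ⟨m, h⟩) (hF0 : ∀ m, T ≤ m → F m = 0)
    (c : ℕ → ℝ) (hc : ∀ i ≤ T - 1, c i = ∑ k ∈ Finset.range (T - i), F k * F (k + i))
    (q : ℕ → ℝ)
    (hq : ∀ j, q j = c 0 + 2 * ∑ i ∈ Finset.Icc 1 (T - 1),
      c i * Real.cos (2 * π * j * i / n))
    (σ : Fin n → ℝ) (e : Fin n ≃ Fin n)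
    (hσ : ∀ i : Fin n, σ i = q (e i)) (hsort : Antitone σ) :
    ∀ p : ℕ, ∀ _hp1 : 1 ≤ p, ∀ _hpn : p ≤ n,
      σ ⟨0, by omega⟩ - σ ⟨p - 1, by omega⟩ ≤
        π * (∑ k, f k ^ 2) * (T : ℝ) ^ 2 * p / n := by
  intro p hp1 hpn
  have hn1 : 1 ≤ n := le_trans hT hn
  have hnR : (0:ℝ) < n := by exact_mod_cast hn1
  -- c 0 as sum of squares
  have hc0' : c 0 = ∑ k ∈ Finset.range T, F k ^ 2 := by
    rw [hc 0 (Nat.zero_le _), Nat.sub_zero]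
    exact Finset.sum_congr rfl fun k _ => by rw [Nat.add_zero, sq]
  have hc0 : c 0 = ∑ k, f k ^ 2 := by
    rw [hc0', ← Fin.sum_univ_eq_sum_range (fun k => F k ^ 2) T]
    exact Finset.sum_congr rfl fun k _ => by rw [hF k.val k.isLt]
  have hc0n : 0 ≤ c 0 := by
    rw [hc0']; exact Finset.sum_nonneg fun k _ => sq_nonneg _
  -- |c i| ≤ c 0
  have hcb : ∀ i ∈ Finset.Icc 1 (T-1), |c i| ≤ c 0 := by
    intro i hi
    obtain ⟨hi1, hi2⟩ := Finset.mem_Icc.1 hi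
    rw [hc i hi2]
    have hA : ∑ k ∈ Finset.range (T-i), F k ^ 2 ≤ c 0 := by
      rw [hc0']
      exact Finset.sum_le_sum_of_subset_of_nonneg
        (Finset.range_subset_range.2 (by omega)) (fun k _ _ => sq_nonneg _)
    have hB : ∑ k ∈ Finset.range (T-i), F (k+i) ^ 2 ≤ c 0 := by
      have h1 : ∑ k ∈ Finset.range (T-i), F (k+i) ^ 2
          = ∑ j ∈ Finset.Ico i T, F j ^ 2 := by
        rw [Finset.sum_Ico_eq_sum_range]
        exact Finset.sum_congr rfl fun k _ => by rw [Nat.add_comm]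
      rw [h1, hc0']
      refine Finset.sum_le_sum_of_subset_of_nonneg ?_ (fun k _ _ => sq_nonneg _)
      intro x hx
      rw [Finset.mem_Ico] at hx
      exact Finset.mem_range.2 hx.2
    calc |∑ k ∈ Finset.range (T-i), F k * F (k+i)|
        ≤ ∑ k ∈ Finset.range (T-i), |F k * F (k+i)| := Finset.abs_sum_le_sum_abs _ _
      _ ≤ ∑ k ∈ Finset.range (T-i), (F k ^ 2 + F (k+i) ^ 2)/2 := by
          refine Finset.sum_le_sum fun k _ => ?_
          rw [abs_mul]
          nlinarith [sq_nonneg (|F k| - |F (k+i)|), sq_abs (F k), sq_abs (F (k+i)),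
            abs_nonneg (F k), abs_nonneg (F (k+i))]
      _ = ((∑ k ∈ Finset.range (T-i), F k ^ 2)
            + ∑ k ∈ Finset.range (T-i), F (k+i) ^ 2)/2 := by
          rw [← Finset.sum_add_distrib, Finset.sum_div]
      _ ≤ c 0 := by linarith
  -- setup indices
  have h0n : 0 < n := hn1
  set j0 : ℕ := ((e ⟨0, by omega⟩ : Fin n) : ℕ) with hj0
  set m : ℕ := p / 2 with hm
  have hmn : m ≤ n := by omega
  set g : ℕ → ℕ := fun k => (j0 + (n - m) + k) % n with hgdef
  have hg : ∀ k, g k < n := fun k => Nat.mod_lt _ h0n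
  have hginj : ∀ k1 ∈ Finset.range p, ∀ k2 ∈ Finset.range p, g k1 = g k2 → k1 = k2 := by
    intro k1 hk1 k2 hk2 h
    rw [Finset.mem_range] at hk1 hk2
    have h' : (j0 + (n-m)) + k1 ≡ (j0 + (n-m)) + k2 [MOD n] := h
    have h2 : k1 % n = k2 % n := Nat.ModEq.add_left_cancel' _ h'
    rw [Nat.mod_eq_of_lt (by omega), Nat.mod_eq_of_lt (by omega)] at h2
    exact h2
  -- there is a point near j0 whose q-value is at most σ (p-1)
  have hex : ∃ k, k < p ∧ q (g k) ≤ σ ⟨p-1, by omega⟩ := by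
    by_contra hcon
    push_neg at hcon
    have hmem : ∀ k ∈ Finset.range p,
        ((e.symm ⟨g k, hg k⟩ : Fin n) : ℕ) ∈ Finset.range (p-1) := by
      intro k hk
      rw [Finset.mem_range] at hk ⊢
      by_contra hge
      push_neg at hge
      have hle : σ (e.symm ⟨g k, hg k⟩) ≤ σ ⟨p-1, by omega⟩ := by
        apply hsort
        rw [Fin.le_def]
        simpa using hge
      have heq : σ (e.symm ⟨g k, hg k⟩) = q (g k) := by
        rw [hσ]; simp
      rw [heq] at hle
      exact absurd hle (not_le.2 (hcon k hk))
    have hcard := Finset.card_le_card_of_injOn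
      (fun k => ((e.symm ⟨g k, hg k⟩ : Fin n) : ℕ)) hmem ?_
    · rw [Finset.card_range, Finset.card_range] at hcard
      omega
    · intro k1 hk1 k2 hk2 hkk
      simp only at hkk
      apply hginj k1 hk1 k2 hk2
      have hfineq : (⟨g k1, hg k1⟩ : Fin n) = ⟨g k2, hg k2⟩ :=
        e.symm.injective (Fin.val_injective hkk)
      exact congrArg Fin.val hfineq
  obtain ⟨k, hkp, hqs⟩ := hex
  -- per-frequency cosine bound
  have hcos : ∀ i ∈ Finset.Icc 1 (T-1),
      |Real.cos (2*π*(j0:ℝ)*i/n) - Real.cos (2*π*((g k:ℕ):ℝ)*i/n)| ≤ π * p * i / n := by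
    intro i hi
    set B : ℤ := (j0:ℤ) + k - m with hB
    set A : ℕ := j0 + (n - m) + k with hA
    have hsB : ∃ t : ℤ, ((g k : ℕ):ℤ) = B + n * t := by
      refine ⟨1 - (A / n : ℕ), ?_⟩
      have hdiv : A % n + n * (A / n) = A := Nat.mod_add_div A n
      have hs : ((g k : ℕ):ℤ) + (n:ℤ) * ((A/n : ℕ):ℤ) = (A:ℤ) := by
        exact_mod_cast hdiv
      have hAc : (A:ℤ) = (j0:ℤ) + ((n:ℤ) - m) + k := by
        rw [hA]; push_cast [hmn]; ring
      rw [hB]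
      linear_combination hs + hAc
    obtain ⟨t, ht⟩ := hsB
    have hcoseq : Real.cos (2*π*((g k:ℕ):ℝ)*i/n) = Real.cos (2*π*((B:ℤ):ℝ)*i/n) := by
      have hsR : ((g k:ℕ):ℝ) = ((B:ℤ):ℝ) + (n:ℝ)*(t:ℝ) := by exact_mod_cast ht
      have hang : (2*π*((g k:ℕ):ℝ)*i/n) = 2*π*((B:ℤ):ℝ)*i/n + ((t*i : ℤ):ℝ)*(2*π) := by
        rw [hsR]; push_cast; field_simp
      rw [hang, Real.cos_add_int_mul_two_pi]
    rw [hcoseq]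
    have hlip := myCosLip (2*π*(j0:ℝ)*i/n) (2*π*((B:ℤ):ℝ)*i/n)
    refine hlip.trans ?_
    have hang2 : (2*π*(j0:ℝ)*i/n - 2*π*((B:ℤ):ℝ)*i/n)
        = 2*π*((((m:ℤ) - k : ℤ)):ℝ)*i/n := by
      rw [hB]; push_cast; ring
    rw [hang2]
    have hDle : |((((m:ℤ) - k : ℤ)):ℝ)| ≤ (p:ℝ)/2 := by
      have hnat : ((m:ℤ) - k).natAbs * 2 ≤ p := by omega
      have h1 : |((((m:ℤ) - k : ℤ)):ℝ)| = ((((m:ℤ) - k).natAbs : ℕ):ℝ) := by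
        rw [Nat.cast_natAbs, Int.cast_abs]
      rw [h1]
      have h2 : (((m:ℤ) - k).natAbs : ℝ) * 2 ≤ (p:ℝ) := by exact_mod_cast hnat
      linarith
    rw [abs_div, abs_of_nonneg hnR.le]
    have hnum : |2*π*((((m:ℤ) - k : ℤ)):ℝ)*(i:ℝ)| ≤ π * p * i := by
      rw [abs_mul, abs_mul, abs_of_nonneg (by positivity : (0:ℝ) ≤ 2*π), Nat.abs_cast]
      calc 2*π*|((((m:ℤ) - k : ℤ)):ℝ)| * (i:ℝ) ≤ 2*π*((p:ℝ)/2)*(i:ℝ) := by gcongr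
        _ = π * p * i := by ring
    exact (div_le_div_iff_of_pos_right hnR).2 hnum
  -- assemble
  have hstep : q j0 - q (g k) = 2 * ∑ i ∈ Finset.Icc 1 (T-1),
      c i * (Real.cos (2*π*(j0:ℝ)*i/n) - Real.cos (2*π*((g k:ℕ):ℝ)*i/n)) := by
    have hsub : ∑ i ∈ Finset.Icc 1 (T-1),
        c i * (Real.cos (2*π*(j0:ℝ)*i/n) - Real.cos (2*π*((g k:ℕ):ℝ)*i/n))
        = (∑ i ∈ Finset.Icc 1 (T-1), c i * Real.cos (2*π*(j0:ℝ)*i/n))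
          - ∑ i ∈ Finset.Icc 1 (T-1), c i * Real.cos (2*π*((g k:ℕ):ℝ)*i/n) := by
      rw [← Finset.sum_sub_distrib]
      exact Finset.sum_congr rfl fun i _ => by ring
    rw [hq j0, hq (g k), hsub]; ring
  have hkey : q j0 - q (g k) ≤ π * c 0 * (T:ℝ)^2 * p / n := by
    rw [hstep]
    have hterm : ∀ i ∈ Finset.Icc 1 (T-1),
        c i * (Real.cos (2*π*(j0:ℝ)*i/n) - Real.cos (2*π*((g k:ℕ):ℝ)*i/n))
          ≤ c 0 * (π * p * i / n) := by
      intro i hi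
      calc c i * (Real.cos (2*π*(j0:ℝ)*i/n) - Real.cos (2*π*((g k:ℕ):ℝ)*i/n))
          ≤ |c i * (Real.cos (2*π*(j0:ℝ)*i/n) - Real.cos (2*π*((g k:ℕ):ℝ)*i/n))| :=
            le_abs_self _
        _ = |c i| * |Real.cos (2*π*(j0:ℝ)*i/n) - Real.cos (2*π*((g k:ℕ):ℝ)*i/n)| :=
            abs_mul _ _
        _ ≤ c 0 * (π * p * i / n) :=
            mul_le_mul (hcb i hi) (hcos i hi) (abs_nonneg _) hc0n
    have hsum := Finset.sum_le_sum hterm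
    have heq1 : ∑ i ∈ Finset.Icc 1 (T-1), c 0 * (π * (p:ℝ) * i / n)
        = c 0 * (π * p / n) * ((((T-1:ℕ):ℝ)) * (((T-1:ℕ):ℝ)+1) / 2) := by
      rw [← mySumIcc (T-1), Finset.mul_sum]
      exact Finset.sum_congr rfl fun i _ => by ring
    have hT1 : ((T-1:ℕ):ℝ) = (T:ℝ) - 1 := by
      push_cast [hT]; ring
    have hTT : ((T:ℝ)-1)*(T:ℝ) ≤ (T:ℝ)^2 := by nlinarith [Nat.cast_nonneg (α := ℝ) T]
    have hlast : c 0 * (π * (p:ℝ) / n) * ((((T:ℝ)-1)) * (((T:ℝ)-1)+1) / 2)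
        ≤ π * c 0 * (T:ℝ)^2 * p / (2*n) := by
      have h1 : c 0 * (π * (p:ℝ) / n) * ((((T:ℝ)-1)) * (((T:ℝ)-1)+1) / 2)
          = (π * c 0) * (((T:ℝ)-1)*(T:ℝ)) * ((p:ℝ)/(2*n)) := by ring
      have h2 : π * c 0 * (T:ℝ)^2 * p / (2*n)
          = (π * c 0) * ((T:ℝ)^2) * ((p:ℝ)/(2*n)) := by ring
      rw [h1, h2]
      refine mul_le_mul_of_nonneg_right ?_ (by positivity)
      exact mul_le_mul_of_nonneg_left hTT (mul_nonneg Real.pi_pos.le hc0n)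
    calc 2 * ∑ i ∈ Finset.Icc 1 (T-1),
        c i * (Real.cos (2*π*(j0:ℝ)*i/n) - Real.cos (2*π*((g k:ℕ):ℝ)*i/n))
        ≤ 2 * ∑ i ∈ Finset.Icc 1 (T-1), c 0 * (π * (p:ℝ) * i / n) := by linarith
      _ = 2 * (c 0 * (π * p / n) * ((((T:ℝ)-1)) * (((T:ℝ)-1)+1) / 2)) := by
          rw [heq1, hT1]
      _ ≤ 2 * (π * c 0 * (T:ℝ)^2 * p / (2*n)) := by linarith
      _ = π * c 0 * (T:ℝ)^2 * p / n := by field_simp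
  -- combine
  have hs0 : σ ⟨0, by omega⟩ = q j0 := hσ _
  rw [← hc0, hs0]
  linarith
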